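/- Difference formula: for every natural number n and every integer k ≥ −1, the 1/2-binomial coefficient satisfies [n (k+2)] − [n k] = ((n−2−2k)/(n+2)) · [(n+2) (k+2)]. -/

import Mathlib

open scoped Real Classical

/-- The generalized β-binomial coefficient `[n k]_β`:
`Γ(βn+1)/(Γ(βk+1)·Γ(β(n−k)+1))` when `β(n−k)` is not an integer `≤ -1`, else `0`. -/
noncomputable def bbinom (β : ℝ) (n : ℕ) (k : ℤ) : ℝ :=
  if ∃ m : ℤ, m ≤ -1 ∧ β * ((n : ℝ) - (k : ℝ)) = (m : ℝ) then 0
  else Real.Gamma (β * n + 1) /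
    (Real.Gamma (β * k + 1) * Real.Gamma (β * ((n : ℝ) - (k : ℝ)) + 1))

/-- The 1/2-binomial coefficient. -/
noncomputable def bhalf (n : ℕ) (k : ℤ) : ℝ := bbinom (1/2) n k

theorem bhalf_difference (n : ℕ) (k : ℤ) (hk : -1 ≤ k) :
    bhalf n (k + 2) - bhalf n k =
      (((n : ℝ) - 2 - 2 * (k : ℝ)) / ((n : ℝ) + 2)) * bhalf (n + 2) (k + 2) := by
  simp only [bhalf, bbinom]
  by_cases hA : ∃ m : ℤ, m ≤ -1 ∧ (1/2 : ℝ) * ((n : ℝ) - ((k + 2 : ℤ) : ℝ)) = (m : ℝ)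
  · obtain ⟨m, hm1, hm2⟩ := hA
    have hnk : (n : ℤ) - (k + 2) = 2 * m := by
      have : ((n : ℤ) - (k + 2) : ℝ) = ((2 * m : ℤ) : ℝ) := by push_cast at hm2 ⊢; linarith
      exact_mod_cast this
    rw [if_pos ⟨m, hm1, hm2⟩]
    rcases eq_or_lt_of_le hm1 with hm | hm
    · -- m = -1, so k = n
      have hkn : k = (n : ℤ) := by omega
      have hB : ¬ ∃ m : ℤ, m ≤ -1 ∧ (1/2 : ℝ) * ((n : ℝ) - (k : ℝ)) = (m : ℝ) := by
        rintro ⟨m', hm'1, hm'2⟩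
        have : (k : ℝ) = (n : ℝ) := by exact_mod_cast hkn
        rw [this] at hm'2
        have : (m' : ℝ) = 0 := by linarith
        have : m' = 0 := by exact_mod_cast this
        omega
      have hC : ¬ ∃ m : ℤ, m ≤ -1 ∧ (1/2 : ℝ) * (((n + 2 : ℕ) : ℝ) - ((k + 2 : ℤ) : ℝ)) = (m : ℝ) := by
        rintro ⟨m', hm'1, hm'2⟩
        have hk' : (k : ℝ) = (n : ℝ) := by exact_mod_cast hkn
        push_cast at hm'2
        rw [hk'] at hm'2
        have : (m' : ℝ) = 0 := by linarith
        have : m' = 0 := by exact_mod_cast this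
        omega
      rw [if_neg hB, if_neg hC]
      have hk' : (k : ℝ) = (n : ℝ) := by exact_mod_cast hkn
      have e1 : (1/2 : ℝ) * ((n : ℝ) - (k : ℝ)) + 1 = 1 := by rw [hk']; ring
      have e2 : (1/2 : ℝ) * (((n + 2 : ℕ) : ℝ) - ((k + 2 : ℤ) : ℝ)) + 1 = 1 := by
        push_cast; rw [hk']; ring
      have e3 : (1/2 : ℝ) * ((n + 2 : ℕ) : ℝ) + 1 = (1/2 : ℝ) * ((k + 2 : ℤ) : ℝ) + 1 := by
        push_cast; rw [hk']
      have e4 : (1/2 : ℝ) * (k : ℝ) + 1 = (1/2 : ℝ) * (n : ℝ) + 1 := by rw [hk']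
      rw [e4, e1, e2, e3, Real.Gamma_one, mul_one, mul_one]
      have hΓ : Real.Gamma ((1/2 : ℝ) * (n : ℝ) + 1) ≠ 0 := by
        refine (Real.Gamma_pos_of_pos ?_).ne'
        positivity
      have hΓ2 : Real.Gamma ((1/2 : ℝ) * ((k + 2 : ℤ) : ℝ) + 1) ≠ 0 := by
        refine (Real.Gamma_pos_of_pos ?_).ne'
        push_cast; rw [hk']; positivity
      rw [div_self hΓ, div_self hΓ2, hk']
      have hn2 : (n : ℝ) + 2 ≠ 0 := by positivity
      field_simp
      ring
    · -- m ≤ -2 : everything vanishes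
      have hB : ∃ m' : ℤ, m' ≤ -1 ∧ (1/2 : ℝ) * ((n : ℝ) - (k : ℝ)) = (m' : ℝ) := by
        refine ⟨m + 1, by omega, ?_⟩
        push_cast at hm2 ⊢; linarith
      have hC : ∃ m' : ℤ, m' ≤ -1 ∧ (1/2 : ℝ) * (((n + 2 : ℕ) : ℝ) - ((k + 2 : ℤ) : ℝ)) = (m' : ℝ) := by
        refine ⟨m + 1, by omega, ?_⟩
        push_cast at hm2 ⊢; linarith
      rw [if_pos hB, if_pos hC]
      ring
  · -- main case: nothing vanishes
    have hB : ¬ ∃ m : ℤ, m ≤ -1 ∧ (1/2 : ℝ) * ((n : ℝ) - (k : ℝ)) = (m : ℝ) := by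
      rintro ⟨m, hm1, hm2⟩
      exact hA ⟨m - 1, by omega, by push_cast at hm2 ⊢; linarith⟩
    have hC : ¬ ∃ m : ℤ, m ≤ -1 ∧ (1/2 : ℝ) * (((n + 2 : ℕ) : ℝ) - ((k + 2 : ℤ) : ℝ)) = (m : ℝ) := by
      rintro ⟨m, hm1, hm2⟩
      exact hA ⟨m - 1, by omega, by push_cast at hm2 ⊢; linarith⟩
    rw [if_neg hA, if_neg hB, if_neg hC]
    set a : ℝ := (1/2 : ℝ) * (k : ℝ) with ha
    set b : ℝ := (1/2 : ℝ) * ((n : ℝ) - (k : ℝ)) with hb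
    set x : ℝ := (1/2 : ℝ) * (n : ℝ) with hx
    have hab : x = a + b := by rw [ha, hb, hx]; ring
    have hbne : b ≠ 0 := by
      intro h
      exact hA ⟨-1, le_refl _, by push_cast; rw [hb] at h; linarith⟩
    have hbnat : ∀ m : ℕ, b ≠ -(m : ℝ) := by
      intro m h
      rcases Nat.eq_zero_or_pos m with h0 | h0
      · rw [h0] at h; simp at h; exact hbne h
      · refine hA ⟨-(m : ℤ) - 1, by omega, ?_⟩
        push_cast
        rw [hb] at h
        linarith
    have hb1nat : ∀ m : ℕ, b + 1 ≠ -(m : ℝ) := by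
      intro m h
      refine hA ⟨-(m : ℤ) - 2, by omega, ?_⟩
      push_cast
      rw [hb] at h
      linarith
    have hΓb : Real.Gamma b ≠ 0 := Real.Gamma_ne_zero hbnat
    have hΓb1 : Real.Gamma (b + 1) ≠ 0 := Real.Gamma_ne_zero hb1nat
    have ha1 : (0:ℝ) < a + 1 := by
      rw [ha]
      have : (-1 : ℝ) ≤ (k : ℝ) := by exact_mod_cast hk
      linarith
    have hΓa1 : Real.Gamma (a + 1) ≠ 0 := (Real.Gamma_pos_of_pos ha1).ne'
    have hΓa2 : Real.Gamma (a + 2) ≠ 0 := by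
      refine (Real.Gamma_pos_of_pos ?_).ne'
      linarith
    have hx1 : (0:ℝ) < x + 1 := by rw [hx]; positivity
    -- rewrite arguments
    have eA2 : (1/2 : ℝ) * ((k + 2 : ℤ) : ℝ) + 1 = a + 2 := by rw [ha]; push_cast; ring
    have eA3 : (1/2 : ℝ) * ((n : ℝ) - ((k + 2 : ℤ) : ℝ)) + 1 = b := by rw [hb]; push_cast; ring
    have eC1 : (1/2 : ℝ) * ((n + 2 : ℕ) : ℝ) + 1 = (x + 1) + 1 := by rw [hx]; push_cast; ring
    have eC3 : (1/2 : ℝ) * (((n + 2 : ℕ) : ℝ) - ((k + 2 : ℤ) : ℝ)) + 1 = b + 1 := by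
      rw [hb]; push_cast; ring
    rw [eA2, eA3, eC1, eC3]
    rw [Real.Gamma_add_one hx1.ne', Real.Gamma_add_one hbne]
    have ea2 : a + 2 = (a + 1) + 1 := by ring
    rw [ea2, Real.Gamma_add_one ha1.ne']
    have hn2 : (n : ℝ) + 2 ≠ 0 := by positivity
    have hcoef : (n : ℝ) - 2 - 2 * (k : ℝ) = 2 * b - 2 * a - 2 := by
      rw [ha, hb]; ring
    have hn2' : (n : ℝ) + 2 = 2 * x + 2 := by rw [hx]; ring
    rw [hcoef, hn2', hab]
    have hxne : 2 * (a + b) + 2 ≠ 0 := by rw [← hab, ← hn2']; exact hn2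
    have hxne' : 1 + a + b ≠ 0 := by intro h; apply hxne; linarith
    have hxne'' : a + b + 1 ≠ 0 := by intro h; apply hxne; linarith
    field_simp
    ring
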